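/- If M is a k×k complex Hadamard matrix with entries m_{ij}, and N_1,...,N_k are n×n complex Hadamard matrices, then the kn×kn block matrix K whose (i,j)-th block is m_{ij}·N_j is a complex Hadamard matrix. -/

import Mathlib

open Matrix Complex

/-- A complex Hadamard matrix: all entries unimodular and rows pairwise orthogonal,
i.e. `H * Hᴴ = N • 1`. -/
def IsCHadamard {ι : Type*} [Fintype ι] [DecidableEq ι] (H : Matrix ι ι ℂ) : Prop :=
  (∀ i j, ‖H i j‖ = 1) ∧ H * Hᴴ = (Fintype.card ι : ℂ) • 1

/-- Dita's construction: the block matrix whose `(i,j)`-th block is `m_{ij} • N_j`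
is a complex Hadamard matrix of order `k * n`. -/
theorem dita_construction (k n : ℕ) (M : Matrix (Fin k) (Fin k) ℂ)
    (N : Fin k → Matrix (Fin n) (Fin n) ℂ)
    (hM : IsCHadamard M) (hN : ∀ j, IsCHadamard (N j))
    (K : Matrix (Fin k × Fin n) (Fin k × Fin n) ℂ)
    (hK : ∀ (i j : Fin k) (a b : Fin n), K (i, a) (j, b) = M i j * N j a b) :
    IsCHadamard K := by
  obtain ⟨hM1, hM2⟩ := hM
  constructor
  · rintro ⟨i, a⟩ ⟨j, b⟩
    rw [hK, norm_mul, hM1, (hN j).1, one_mul]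
  · ext ⟨i, a⟩ ⟨j, b⟩
    have hNorth : ∀ (l : Fin k), ∑ c, N l a c * star (N l b c)
        = (n : ℂ) * (if a = b then 1 else 0) := by
      intro l
      have := congrFun (congrFun (hN l).2 a) b
      simpa [Matrix.mul_apply, Matrix.conjTranspose_apply, Matrix.one_apply,
        Fintype.card_fin, mul_ite] using this
    have hMorth : ∑ l, M i l * star (M j l) = (k : ℂ) * (if i = j then 1 else 0) := by
      have := congrFun (congrFun hM2 i) j
      simpa [Matrix.mul_apply, Matrix.conjTranspose_apply, Matrix.one_apply,
        Fintype.card_fin, mul_ite] using this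
    simp only [Matrix.mul_apply, Matrix.conjTranspose_apply, Matrix.smul_apply,
      Matrix.one_apply, smul_eq_mul]
    rw [Fintype.sum_prod_type]
    have key : ∑ l, ∑ c, K (i, a) (l, c) * star (K (j, b) (l, c))
        = ((k : ℂ) * (if i = j then 1 else 0)) * ((n : ℂ) * (if a = b then 1 else 0)) := by
      have step : ∀ l, ∑ c, K (i, a) (l, c) * star (K (j, b) (l, c))
          = (M i l * star (M j l)) * ((n : ℂ) * (if a = b then 1 else 0)) := by
        intro l
        rw [← hNorth l, Finset.mul_sum]
        refine Finset.sum_congr rfl fun c _ => ?_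
        rw [hK, hK, star_mul']
        ring
      simp only [step]
      rw [← Finset.sum_mul, hMorth]
    rw [key]
    have : Fintype.card (Fin k × Fin n) = k * n := by simp
    rw [this]
    push_cast
    by_cases hij : i = j <;> by_cases hab : a = b <;>
      simp [hij, hab, Prod.ext_iff]
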